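/- Let 𝕜 be an algebraically closed field containing 𝔽_q (q a prime power), and let s, r ≥ 1. For each 1 ≤ i ≤ r let δ_i ∈ 𝕜[X_1, …, X_{i-1}] be a polynomial. Then the system of equations X_i^{q^s} - X_i + δ_i(X_1, …, X_{i-1}) = 0 (1 ≤ i ≤ r) has exactly q^{sr} solutions in 𝕜^r. -/

import Mathlib

/-- The set `O = (ℤ/dℤ) × ℤ`; shift the second coordinate by `k`. -/
def shiftO (d : ℕ) (a : ZMod d × ℤ) (k : ℤ) : ZMod d × ℤ := (a.1, a.2 + k)

/-- The map `f : O → O`, `f(τ, i) = (τ-1, i+m)` if `τ = 1`, else `(τ-1, i)`. -/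
def fO (d m : ℕ) (a : ZMod d × ℤ) : ZMod d × ℤ :=
  if a.1 = 1 then (a.1 - 1, a.2 + (m : ℤ)) else (a.1 - 1, a.2)

/-- `A ⊆ O` is a semi-module: bounded below in each component, `A + n ⊆ A`,
`f(A) ⊆ A`, and `O = A + nℤ`. -/
def IsSemiModule (d n m : ℕ) (A : Set (ZMod d × ℤ)) : Prop :=
  (∀ τ : ZMod d, ∃ N : ℤ, ∀ i : ℤ, (τ, i) ∈ A → N ≤ i) ∧
  (∀ a ∈ A, shiftO d a (n : ℤ) ∈ A) ∧
  (∀ a ∈ A, fO d m a ∈ A) ∧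
  (∀ x : ZMod d × ℤ, ∃ a ∈ A, ∃ k : ℤ, x = shiftO d a (k * (n : ℤ)))

/-- `Ā = A \ (A + n)`. -/
def Abar (d n : ℕ) (A : Set (ZMod d × ℤ)) : Set (ZMod d × ℤ) :=
  A \ ((fun a => shiftO d a (n : ℤ)) '' A)

/-- `O^k = {(τ, i) : i ≡ k (mod h)}` where `h = gcd(m, n)`. -/
def Omod (d h : ℕ) (k : ℤ) : Set (ZMod d × ℤ) := {a | (h : ℤ) ∣ (a.2 - k)}



open Polynomial in
lemma AS_card {𝕜 : Type*} [Field 𝕜] [IsAlgClosed 𝕜] {n : ℕ}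
    (hn0 : ((n : ℕ) : 𝕜) = 0) (h2 : 2 ≤ n) (c : 𝕜) :
    Nat.card {z : 𝕜 | z ^ n - z + c = 0} = n := by
  set P : 𝕜[X] := X ^ n - X + C c with hP
  have hderiv : derivative P = -1 := by
    simp [hP, derivative_X_pow, hn0]
  have hsep : P.Separable := ⟨0, -1, by rw [hderiv]; ring⟩
  have hdeg : P.natDegree = n := by
    rw [hP]
    compute_degree!
    · simp [show ¬(1 = n) by omega, show ¬(n = 0) by omega]
    · omega
  have hP0 : P ≠ 0 := fun h => by rw [h, natDegree_zero] at hdeg; omega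
  have hset : {z : 𝕜 | z ^ n - z + c = 0} = P.rootSet 𝕜 := by
    ext z
    simp [mem_rootSet, hP0, hP, sub_eq_zero]
    exact fun _ => hP0
  rw [hset, Nat.card_eq_fintype_card,
    card_rootSet_eq_natDegree hsep (IsAlgClosed.splits _), hdeg]

lemma eval_update_of_not_mem {𝕜 : Type*} [CommSemiring 𝕜] {r : ℕ}
    (P : MvPolynomial (Fin r) 𝕜) (K : Fin r) (h : K ∉ P.vars)
    (x : Fin r → 𝕜) (v : 𝕜) :
    MvPolynomial.eval (Function.update x K v) P = MvPolynomial.eval x P :=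
  MvPolynomial.eval₂Hom_congr' rfl
    (fun j hj _ => Function.update_of_ne (by rintro rfl; exact h hj) _ _) rfl

lemma key_count {𝕜 : Type*} [Field 𝕜] [IsAlgClosed 𝕜] {n : ℕ}
    (hn0 : ((n : ℕ) : 𝕜) = 0) (h2 : 2 ≤ n) {r : ℕ}
    (δ : Fin r → MvPolynomial (Fin r) 𝕜)
    (hδ : ∀ i : Fin r, ∀ j ∈ (δ i).vars, (j : ℕ) < (i : ℕ)) :
    ∀ k, k ≤ r → Nat.card {x : Fin r → 𝕜 |
      (∀ i : Fin r, (i : ℕ) < k → x i ^ n - x i + MvPolynomial.eval x (δ i) = 0) ∧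
      (∀ i : Fin r, k ≤ (i : ℕ) → x i = 0)} = n ^ k := by
  intro k
  induction k with
  | zero =>
    intro _
    have : {x : Fin r → 𝕜 |
        (∀ i : Fin r, (i : ℕ) < 0 → x i ^ n - x i + MvPolynomial.eval x (δ i) = 0) ∧
        (∀ i : Fin r, 0 ≤ (i : ℕ) → x i = 0)} = {fun _ => 0} := by
      ext x
      simp only [Set.mem_setOf_eq, Set.mem_singleton_iff]
      constructor
      · rintro ⟨-, h⟩; funext i; exact h i (Nat.zero_le _)
      · rintro rfl; exact ⟨fun i hi => absurd hi (by omega), fun i _ => rfl⟩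
    rw [this, pow_zero, Nat.card_eq_fintype_card, Set.card_singleton]
  | succ k ih =>
    intro hk1
    have hk : k ≤ r := by omega
    set K : Fin r := ⟨k, by omega⟩ with hK
    set T : Set (Fin r → 𝕜) := {x : Fin r → 𝕜 |
      (∀ i : Fin r, (i : ℕ) < k → x i ^ n - x i + MvPolynomial.eval x (δ i) = 0) ∧
      (∀ i : Fin r, k ≤ (i : ℕ) → x i = 0)} with hT
    -- K not in vars of δ i for i.val ≤ k
    have hKvars : ∀ i : Fin r, (i : ℕ) ≤ k → K ∉ (δ i).vars := by
      intro i hi hmem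
      have := hδ i K hmem
      simp only [hK] at this
      omega
    have E : {x : Fin r → 𝕜 |
        (∀ i : Fin r, (i : ℕ) < k + 1 → x i ^ n - x i + MvPolynomial.eval x (δ i) = 0) ∧
        (∀ i : Fin r, k + 1 ≤ (i : ℕ) → x i = 0)} ≃
        Σ y : T, {z : 𝕜 | z ^ n - z + MvPolynomial.eval (y : Fin r → 𝕜) (δ K) = 0} := by
      refine ⟨fun x => ⟨⟨Function.update x.1 K 0, ?_⟩, ⟨x.1 K, ?_⟩⟩,
        fun yz => ⟨Function.update (yz.1 : Fin r → 𝕜) K yz.2.1, ?_⟩, ?_, ?_⟩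
      · obtain ⟨x, hx1, hx2⟩ := x
        constructor
        · intro i hi
          rw [Function.update_of_ne (by simp [hK, Fin.ext_iff]; omega),
            eval_update_of_not_mem _ _ (hKvars i (by omega))]
          exact hx1 i (by omega)
        · intro i hi
          rcases eq_or_ne i K with rfl | hne
          · exact Function.update_self _ _ _
          · rw [Function.update_of_ne hne]
            exact hx2 i (by simp [hK, Fin.ext_iff] at hne; omega)
      · obtain ⟨x, hx1, hx2⟩ := x
        simp only [Set.mem_setOf_eq]
        rw [eval_update_of_not_mem _ _ (hKvars K le_rfl)]
        exact hx1 K (by simp [hK])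
      · obtain ⟨⟨y, hy1, hy2⟩, z, hz⟩ := yz
        constructor
        · intro i hi
          rcases eq_or_ne i K with rfl | hne
          · rw [Function.update_self, eval_update_of_not_mem _ _ (hKvars K le_rfl)]
            exact hz
          · have hik : (i : ℕ) < k := by simp [hK, Fin.ext_iff] at hne; omega
            rw [Function.update_of_ne hne,
              eval_update_of_not_mem _ _ (hKvars i (by omega))]
            exact hy1 i hik
        · intro i hi
          rw [Function.update_of_ne (by simp [hK, Fin.ext_iff]; omega)]
          exact hy2 i (by omega)
      · rintro ⟨x, hx⟩
        ext i
        simp only [Function.update_idem, Function.update_eq_self]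
      · rintro ⟨⟨y, hy1, hy2⟩, z, hz⟩
        have hyK : y K = 0 := hy2 K (by simp [hK])
        have hyy : Function.update (Function.update y K z) K 0 = y := by
          rw [Function.update_idem, ← hyK, Function.update_eq_self]
        refine Sigma.ext (Subtype.ext hyy) ((Subtype.heq_iff_coe_eq ?_).2 ?_)
        · intro x
          show x ^ n - x + _ = 0 ↔ x ^ n - x + _ = 0
          rw [show ((⟨Function.update (Function.update y K z) K 0, _⟩ : T) : Fin r → 𝕜)
            = y from hyy]
        · exact Function.update_self _ _ _
    have hfin : ∀ y : T, Nat.card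
        {z : 𝕜 | z ^ n - z + MvPolynomial.eval (y : Fin r → 𝕜) (δ K) = 0} = n :=
      fun y => AS_card hn0 h2 _
    have E2 : (Σ y : T, {z : 𝕜 | z ^ n - z +
        MvPolynomial.eval (y : Fin r → 𝕜) (δ K) = 0}) ≃ T × Fin n :=
      (Equiv.sigmaCongrRight (fun y =>
        (Nat.equivFinOfCardPos (by rw [hfin y]; omega)).trans
          (finCongr (hfin y)))).trans (Equiv.sigmaEquivProd _ _)
    rw [Nat.card_congr (E.trans E2), Nat.card_prod, ih hk,
      Nat.card_eq_fintype_card, Fintype.card_fin, pow_succ]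

/-- A triangular system of Artin–Schreier equations
`X_i ^ (q^s) - X_i + δ_i(X_1, …, X_{i-1}) = 0` over an algebraically closed field
containing `𝔽_q` has exactly `q^(s r)` solutions. -/
theorem stmt13 (p e q s r : ℕ) (hp : p.Prime) (he : 1 ≤ e) (hq : q = p ^ e)
    (hs : 1 ≤ s) (hr : 1 ≤ r)
    (𝕜 : Type*) [Field 𝕜] [IsAlgClosed 𝕜] [CharP 𝕜 p]
    (δ : Fin r → MvPolynomial (Fin r) 𝕜)
    (hδ : ∀ i : Fin r, ∀ j ∈ (δ i).vars, (j : ℕ) < (i : ℕ)) :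
    {x : Fin r → 𝕜 | ∀ i : Fin r,
      x i ^ (q ^ s) - x i + MvPolynomial.eval x (δ i) = 0}.ncard = q ^ (s * r) := by
  have hq1 : 1 < q := hq ▸ Nat.one_lt_pow (by omega) hp.one_lt
  have h2 : 2 ≤ q ^ s := le_trans hq1 (Nat.le_self_pow (by omega) q)
  have hn0 : ((q ^ s : ℕ) : 𝕜) = 0 := by
    rw [CharP.cast_eq_zero_iff 𝕜 p]
    rw [hq, ← pow_mul]
    exact dvd_pow_self p (by positivity)
  have hset : {x : Fin r → 𝕜 | ∀ i : Fin r,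
      x i ^ (q ^ s) - x i + MvPolynomial.eval x (δ i) = 0} =
      {x : Fin r → 𝕜 |
        (∀ i : Fin r, (i : ℕ) < r →
          x i ^ (q ^ s) - x i + MvPolynomial.eval x (δ i) = 0) ∧
        (∀ i : Fin r, r ≤ (i : ℕ) → x i = 0)} := by
    ext x
    simp only [Set.mem_setOf_eq]
    exact ⟨fun h => ⟨fun i _ => h i, fun i hi => absurd i.isLt (by omega)⟩,
      fun h i => h.1 i i.isLt⟩
  rw [hset, ← Nat.card_coe_set_eq, key_count hn0 h2 δ hδ r le_rfl, ← pow_mul, mul_comm]
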